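/- Let s < 0, R > 0, N ≥ 2, and let φ_{0,N} be defined via 𝓕φ_{0,N} = R·χ_{I_N}, where I_N = [-N-1,-N+1] ∪ [N-1,N+1]. Then for all 1 ≤ p, q ≤ ∞ there exist constants c, C > 0 (independent of R, N) with c·R·N^s ≤ ‖φ_{0,N}‖_{ŵ^{p,q}_s(ℝ)} ≤ C·R·N^s. -/

import Mathlib

open MeasureTheory
open scoped ENNReal

lemma elp_Ioc_const (p : ℝ≥0∞) (hp : p ≠ 0) (a : ℝ) (c : ℂ) :
    eLpNorm ((Set.Ioc a (a + 1)).indicator (fun _ => c)) p volume = (‖c‖₊ : ℝ≥0∞) := by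
  have hvol : volume (Set.Ioc a (a + 1)) = 1 := by
    rw [Real.volume_Ioc]; norm_num
  rw [eLpNorm_indicator_const' measurableSet_Ioc (by rw [hvol]; norm_num) hp, hvol,
    ENNReal.one_rpow, mul_one, enorm_eq_nnnorm]

lemma count_lower (q : ℝ≥0∞) (hq : q ≠ 0) (f : ℤ → ℝ) (hf : ∀ n, 0 ≤ f n) (n₀ : ℤ) :
    ENNReal.ofReal (f n₀) ≤ eLpNorm f q Measure.count := by
  have h : eLpNorm (({n₀} : Set ℤ).indicator (fun _ => f n₀)) q Measure.count
      ≤ eLpNorm f q Measure.count := by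
    apply eLpNorm_mono
    intro n
    rcases eq_or_ne n n₀ with rfl | hne
    · simp
    · rw [Set.indicator_of_notMem (by simpa using hne)]
      simpa using hf n
  refine le_trans ?_ h
  rw [eLpNorm_indicator_const' (measurableSet_singleton n₀)
    (by simp [Measure.count_singleton]) hq]
  simp [Measure.count_singleton, Real.enorm_eq_ofReal (hf n₀)]

lemma count_upper (q : ℝ≥0∞) (hq : 1 ≤ q) (f : ℤ → ℝ) (F : Finset ℤ) (hF : F.Nonempty)
    (a : ℝ) (ha : 0 ≤ a) (h1 : ∀ n ∈ F, |f n| ≤ a) (h0 : ∀ n ∉ F, f n = 0) :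
    eLpNorm f q Measure.count ≤ ENNReal.ofReal a * F.card := by
  have hq0 : q ≠ 0 := (lt_of_lt_of_le zero_lt_one hq).ne'
  have hmono : eLpNorm f q Measure.count
      ≤ eLpNorm ((F : Set ℤ).indicator (fun _ => a)) q Measure.count := by
    apply eLpNorm_mono
    intro n
    by_cases h : n ∈ F
    · rw [Set.indicator_of_mem (Finset.mem_coe.mpr h)]
      simpa [Real.norm_eq_abs, abs_of_nonneg ha] using h1 n h
    · simp [h0 n h, Set.indicator_of_notMem (Finset.mem_coe.not.mpr h)]
  refine hmono.trans ?_
  rw [eLpNorm_indicator_const' F.measurableSet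
    (Measure.count_ne_zero (by simpa using hF)) hq0, Measure.count_apply_finset,
    Real.enorm_eq_ofReal ha]
  have hcard1 : (1 : ℝ≥0∞) ≤ (F.card : ℝ≥0∞) := by
    exact_mod_cast Nat.one_le_iff_ne_zero.mpr hF.card_pos.ne'
  have hexp : 1 / q.toReal ≤ 1 := by
    rcases eq_or_ne q ∞ with rfl | hq'
    · simp
    · have h1q : (1 : ℝ) ≤ q.toReal := by
        simpa using ENNReal.toReal_mono hq' hq
      rw [div_le_one (by linarith)]; exact h1q
  calc ENNReal.ofReal a * (F.card : ℝ≥0∞) ^ (1 / q.toReal)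
      ≤ ENNReal.ofReal a * (F.card : ℝ≥0∞) ^ (1 : ℝ) := by
        exact mul_le_mul_right (ENNReal.rpow_le_rpow_of_exponent_le hcard1 hexp) _
    _ = ENNReal.ofReal a * F.card := by rw [ENNReal.rpow_one]

lemma indicator_norm_mono {t u : Set ℝ} (h : t ⊆ u) (c : ℂ) (x : ℝ) :
    ‖t.indicator (fun _ => c) x‖ ≤ ‖u.indicator (fun _ => c) x‖ := by
  by_cases hx : x ∈ t
  · rw [Set.indicator_of_mem hx, Set.indicator_of_mem (h hx)]
  · rw [Set.indicator_of_notMem hx]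
    simp


lemma weight_upper (s N : ℝ) (hs : s < 0) (hN : 2 ≤ N) (m n : ℤ)
    (hm1 : (m:ℝ) ≤ N) (hm2 : N < (m:ℝ) + 1) (hm2R : (2:ℝ) ≤ (m:ℝ))
    (hmem : n = m-1 ∨ n = m ∨ n = m+1 ∨ n = m+2 ∨
      n = -m-2 ∨ n = -m-1 ∨ n = -m ∨ n = -m+1) :
    (1 + (n:ℝ) ^ 2) ^ (s/2) ≤ (4:ℝ) ^ (-s) * N ^ s := by
  have hNpos : (0:ℝ) < N := by linarith
  have hn2 : ((m:ℝ) - 1) ^ 2 ≤ (n:ℝ) ^ 2 := by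
    rcases hmem with rfl|rfl|rfl|rfl|rfl|rfl|rfl|rfl <;> push_cast <;> nlinarith
  have hbase : (N/4) ^ 2 ≤ 1 + (n:ℝ) ^ 2 := by
    have e1 : (0:ℝ) ≤ (m:ℝ) - 1 - (N - 2) := by linarith
    have e2 : (0:ℝ) ≤ (m:ℝ) - 1 + (N - 2) := by linarith
    have h3 : (N - 2) ^ 2 ≤ ((m:ℝ) - 1) ^ 2 := by nlinarith [mul_nonneg e1 e2]
    have h4 : (N/4) ^ 2 ≤ 1 + (N - 2) ^ 2 := by nlinarith [sq_nonneg (15*N - 32)]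
    linarith
  have h1 : (1 + (n:ℝ) ^ 2) ^ (s/2) ≤ ((N/4) ^ 2 : ℝ) ^ (s/2) :=
    Real.rpow_le_rpow_of_nonpos (by positivity) hbase (by linarith)
  have h2 : ((N/4) ^ 2 : ℝ) ^ (s/2) = (N/4) ^ s := by
    rw [← Real.rpow_natCast (N/4) 2, ← Real.rpow_mul (by positivity)]
    congr 1
    push_cast
    ring
  have h3 : (N/4 : ℝ) ^ s = (4:ℝ) ^ (-s) * N ^ s := by
    rw [Real.div_rpow hNpos.le (by norm_num), Real.rpow_neg (by norm_num)]
    ring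
  rw [h2, h3] at h1; exact h1

lemma cube_empty (N : ℝ) (hN : 2 ≤ N) (m n : ℤ)
    (hm1 : (m:ℝ) ≤ N) (hm2 : N < (m:ℝ) + 1)
    (hnl : ¬(n = m-1 ∨ n = m ∨ n = m+1 ∨ n = m+2 ∨
      n = -m-2 ∨ n = -m-1 ∨ n = -m ∨ n = -m+1)) :
    Set.Ioc ((n : ℝ) - 1/2) ((n : ℝ) + 1/2) ∩
      (Set.Icc (-N - 1) (-N + 1) ∪ Set.Icc (N - 1) (N + 1)) = ∅ := by
  rw [Set.eq_empty_iff_forall_notMem]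
  rintro x ⟨hx1, hx2⟩
  have hx1a : (n:ℝ) - 1/2 < x := hx1.1
  have hx1b : x ≤ (n:ℝ) + 1/2 := hx1.2
  rcases hx2 with hx2 | hx2
  · have ha : -N - 1 ≤ x := hx2.1
    have hb : x ≤ -N + 1 := hx2.2
    have c1 : ((-m - 3 : ℤ) : ℝ) < (n : ℝ) := by push_cast; linarith
    have c2 : ((n : ℝ)) < ((-m + 2 : ℤ) : ℝ) := by push_cast; linarith
    have d1 : -m - 3 < n := by exact_mod_cast c1
    have d2 : n < -m + 2 := by exact_mod_cast c2
    exact hnl (by omega)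
  · have ha : N - 1 ≤ x := hx2.1
    have hb : x ≤ N + 1 := hx2.2
    have c1 : ((m - 2 : ℤ) : ℝ) < (n : ℝ) := by push_cast; linarith
    have c2 : ((n : ℝ)) < ((m + 3 : ℤ) : ℝ) := by push_cast; linarith
    have d1 : m - 2 < n := by exact_mod_cast c1
    have d2 : n < m + 3 := by exact_mod_cast c2
    exact hnl (by omega)

noncomputable def fourierAmalgamNorm (p q : ℝ≥0∞) (s : ℝ) (fhat : ℝ → ℂ) : ℝ≥0∞ :=
  eLpNorm
    (fun n : ℤ =>
      (eLpNorm ((Set.Ioc ((n : ℝ) - 1/2) ((n : ℝ) + 1/2)).indicator fhat) p volume).toReal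
        * ((1 + (n : ℝ) ^ 2) ^ (s / 2)))
    q Measure.count

set_option maxHeartbeats 1000000 in
theorem perturbation_amalgam_norm (s : ℝ) (hs : s < 0) (p q : ℝ≥0∞)
    (hp : 1 ≤ p) (hq : 1 ≤ q) :
    ∃ c C : ℝ, 0 < c ∧ 0 < C ∧
      ∀ R N : ℝ, 0 < R → 2 ≤ N →
        ENNReal.ofReal (c * R * N ^ s) ≤
            fourierAmalgamNorm p q s
              ((Set.Icc (-N - 1) (-N + 1) ∪ Set.Icc (N - 1) (N + 1)).indicator
                (fun _ => (R : ℂ))) ∧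
          fourierAmalgamNorm p q s
              ((Set.Icc (-N - 1) (-N + 1) ∪ Set.Icc (N - 1) (N + 1)).indicator
                (fun _ => (R : ℂ)))
            ≤ ENNReal.ofReal (C * R * N ^ s) := by
  have hp0 : p ≠ 0 := (lt_of_lt_of_le zero_lt_one hp).ne'
  have hq0 : q ≠ 0 := (lt_of_lt_of_le zero_lt_one hq).ne'
  refine ⟨(2:ℝ) ^ s, 8 * (4:ℝ) ^ (-s), Real.rpow_pos_of_pos two_pos s, by positivity, ?_⟩
  intro R N hR hN
  have hNpos : (0:ℝ) < N := by linarith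
  set I : Set ℝ := Set.Icc (-N - 1) (-N + 1) ∪ Set.Icc (N - 1) (N + 1) with hI
  set g : ℤ → ℝ := fun n =>
    (eLpNorm ((Set.Ioc ((n : ℝ) - 1/2) ((n : ℝ) + 1/2)).indicator
      (I.indicator (fun _ => (R : ℂ)))) p volume).toReal
      * ((1 + (n : ℝ) ^ 2) ^ (s / 2)) with hg
  have hnorm : fourierAmalgamNorm p q s (I.indicator (fun _ => (R : ℂ)))
      = eLpNorm g q Measure.count := rfl
  have hgnn : ∀ n, 0 ≤ g n := fun n =>
    mul_nonneg ENNReal.toReal_nonneg (Real.rpow_nonneg (by positivity) _)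
  have hindrw : ∀ n : ℤ, (Set.Ioc ((n : ℝ) - 1/2) ((n : ℝ) + 1/2)).indicator
      (I.indicator (fun _ => (R : ℂ)))
      = (Set.Ioc ((n : ℝ) - 1/2) ((n : ℝ) + 1/2) ∩ I).indicator (fun _ => (R : ℂ)) :=
    fun n => Set.indicator_indicator _ _ _
  have hcube : ∀ a : ℝ, eLpNorm ((Set.Ioc (a - 1/2) (a + 1/2)).indicator
      (fun _ => (R : ℂ))) p volume = ENNReal.ofReal R := by
    intro a
    have he : a + 1/2 = (a - 1/2) + 1 := by ring
    rw [he, elp_Ioc_const p hp0]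
    simp [Complex.nnnorm_real, Real.enorm_eq_ofReal hR.le]
    exact Real.enorm_eq_ofReal hR.le
  constructor
  · -- lower bound
    set m₀ : ℤ := ⌊N + 1/2⌋ with hm₀
    have h1 : (m₀ : ℝ) ≤ N + 1/2 := Int.floor_le _
    have h2 : N + 1/2 < (m₀ : ℝ) + 1 := Int.lt_floor_add_one _
    have hsub : Set.Ioc ((m₀ : ℝ) - 1/2) ((m₀ : ℝ) + 1/2) ⊆ I := by
      intro x hx
      exact Set.mem_union_right _ (Set.mem_Icc.mpr ⟨by linarith [hx.1], by linarith [hx.2]⟩)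
    have hint : Set.Ioc ((m₀ : ℝ) - 1/2) ((m₀ : ℝ) + 1/2) ∩ I
        = Set.Ioc ((m₀ : ℝ) - 1/2) ((m₀ : ℝ) + 1/2) := Set.inter_eq_left.mpr hsub
    have hgm : g m₀ = R * ((1 + (m₀ : ℝ) ^ 2) ^ (s / 2)) := by
      simp only [hg]
      rw [hindrw, hint, hcube, ENNReal.toReal_ofReal hR.le]
    have hm₀2 : (2:ℤ) ≤ m₀ := Int.le_floor.mpr (by push_cast; linarith)
    have hm₀R : (0:ℝ) ≤ (m₀:ℝ) := by exact_mod_cast (by omega : (0:ℤ) ≤ m₀)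
    have hb : 1 + (m₀ : ℝ) ^ 2 ≤ (2 * N) ^ 2 := by nlinarith
    have hw : (2 * N) ^ s ≤ (1 + (m₀ : ℝ) ^ 2) ^ (s / 2) := by
      have h1' : ((2 * N) ^ 2 : ℝ) ^ (s / 2) ≤ (1 + (m₀ : ℝ) ^ 2) ^ (s / 2) :=
        Real.rpow_le_rpow_of_nonpos (by positivity) hb (by linarith)
      calc (2 * N) ^ s = ((2 * N) ^ 2 : ℝ) ^ (s / 2) := by
            rw [← Real.rpow_natCast (2 * N) 2, ← Real.rpow_mul (by positivity)]
            congr 1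
            push_cast
            ring
        _ ≤ _ := h1'
    have hglow : (2:ℝ) ^ s * R * N ^ s ≤ g m₀ := by
      rw [hgm]
      have h2N : (2 * N) ^ s = 2 ^ s * N ^ s := Real.mul_rpow (by norm_num) hNpos.le
      calc (2:ℝ) ^ s * R * N ^ s = R * (2 ^ s * N ^ s) := by ring
        _ ≤ R * ((1 + (m₀:ℝ) ^ 2) ^ (s / 2)) := by
            refine mul_le_mul_of_nonneg_left ?_ hR.le
            rw [← h2N]; exact hw
    rw [hnorm]
    exact le_trans (ENNReal.ofReal_le_ofReal hglow) (count_lower q hq0 g hgnn m₀)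
  · -- upper bound
    set m : ℤ := ⌊N⌋ with hm
    have hm1 : (m : ℝ) ≤ N := Int.floor_le _
    have hm2 : N < (m : ℝ) + 1 := Int.lt_floor_add_one _
    have hm2' : (2:ℤ) ≤ m := Int.le_floor.mpr (by push_cast; linarith)
    have hm2R : (2:ℝ) ≤ (m:ℝ) := by exact_mod_cast hm2'
    set l : List ℤ := [m-1, m, m+1, m+2, -m-2, -m-1, -m, -m+1] with hl
    set F : Finset ℤ := l.toFinset with hF
    have hFcard : F.card ≤ 8 := le_trans (List.toFinset_card_le l) (by rw [hl]; simp)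
    have hFne : F.Nonempty := ⟨m, by rw [hF, hl]; simp⟩
    have hmemF : ∀ n : ℤ, n ∈ F ↔ (n = m-1 ∨ n = m ∨ n = m+1 ∨ n = m+2 ∨
        n = -m-2 ∨ n = -m-1 ∨ n = -m ∨ n = -m+1) := by
      intro n; rw [hF, hl]; simp [List.mem_toFinset]
    have h0 : ∀ n ∉ F, g n = 0 := by
      intro n hn
      have hempty := cube_empty N hN m n hm1 hm2 (fun h => hn ((hmemF n).mpr h))
      simp only [hg]
      rw [hindrw, hI, hempty]
      simp
    have hbound : ∀ n ∈ F, |g n| ≤ (4:ℝ) ^ (-s) * R * N ^ s := by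
      intro n hnF
      rw [abs_of_nonneg (hgnn n)]
      have hle : (eLpNorm ((Set.Ioc ((n : ℝ) - 1/2) ((n : ℝ) + 1/2) ∩ I).indicator
          (fun _ => (R : ℂ))) p volume).toReal ≤ R := by
        have h1 : eLpNorm ((Set.Ioc ((n:ℝ)-1/2) ((n:ℝ)+1/2) ∩ I).indicator
            (fun _ => (R:ℂ))) p volume
            ≤ eLpNorm ((Set.Ioc ((n:ℝ)-1/2) ((n:ℝ)+1/2)).indicator (fun _ => (R:ℂ))) p volume :=
          eLpNorm_mono (fun x => indicator_norm_mono Set.inter_subset_left _ x)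
        rw [hcube] at h1
        exact ENNReal.toReal_le_of_le_ofReal hR.le h1
      have hwle : (1 + (n:ℝ) ^ 2) ^ (s/2) ≤ (4:ℝ) ^ (-s) * N ^ s :=
        weight_upper s N hs hN m n hm1 hm2 hm2R ((hmemF n).mp hnF)
      calc g n ≤ R * ((1 + (n:ℝ) ^ 2) ^ (s/2)) := by
            simp only [hg]
            rw [hindrw]
            exact mul_le_mul_of_nonneg_right hle (Real.rpow_nonneg (by positivity) _)
        _ ≤ R * ((4:ℝ) ^ (-s) * N ^ s) := mul_le_mul_of_nonneg_left hwle hR.le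
        _ = (4:ℝ) ^ (-s) * R * N ^ s := by ring
    rw [hnorm]
    have hup := count_upper q hq g F hFne ((4:ℝ) ^ (-s) * R * N ^ s) (by positivity) hbound h0
    refine hup.trans ?_
    have h8 : (F.card : ℝ≥0∞) ≤ 8 := by exact_mod_cast hFcard
    calc ENNReal.ofReal ((4:ℝ) ^ (-s) * R * N ^ s) * F.card
        ≤ ENNReal.ofReal ((4:ℝ) ^ (-s) * R * N ^ s) * 8 := mul_le_mul_right h8 _
      _ = ENNReal.ofReal (8 * (4:ℝ) ^ (-s) * R * N ^ s) := by
          rw [mul_comm, show ((8:ℝ≥0∞)) = ENNReal.ofReal 8 by norm_num,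
            ← ENNReal.ofReal_mul (by norm_num)]
          congr 1
          ring
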